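/- Fix p ∈ (0,1). For s ∈ [0,1] define r(s) = √(1 − 4p(1−p)(1−s²)) and define the entropy S(s) = −(1/2 + r(s)/2)·ln(1/2 + r(s)/2) − (1/2 − r(s)/2)·ln(1/2 − r(s)/2), with the convention 0·ln 0 = 0. Then the map s ↦ S(s) is strictly decreasing (strictly antitone) on [0,1], and S(1) = 0. -/

import Mathlib

private lemma F_strictAnti :
    StrictAntiOn (fun x : ℝ => -((1/2 + x/2) * Real.log (1/2 + x/2))
      - (1/2 - x/2) * Real.log (1/2 - x/2)) (Set.Icc 0 1) := by
  apply strictAntiOn_of_deriv_neg (convex_Icc 0 1)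
  · have h1 : Continuous fun x : ℝ => (1/2 + x/2) * Real.log (1/2 + x/2) :=
      Real.continuous_mul_log.comp (by continuity)
    have h2 : Continuous fun x : ℝ => (1/2 - x/2) * Real.log (1/2 - x/2) :=
      Real.continuous_mul_log.comp (by continuity)
    exact (h1.neg.sub h2).continuousOn
  · intro x hx
    rw [interior_Icc] at hx
    have ha : (0:ℝ) < 1/2 + x/2 := by cases hx; linarith
    have hb : (0:ℝ) < 1/2 - x/2 := by cases hx; linarith
    have inner1 : HasDerivAt (fun x : ℝ => 1/2 + x/2) (1/2) x := by
      simpa using ((hasDerivAt_id x).div_const 2).const_add (1/2 : ℝ)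
    have inner2 : HasDerivAt (fun x : ℝ => 1/2 - x/2) (-(1/2)) x := by
      simpa using ((hasDerivAt_id x).div_const 2).const_sub (1/2 : ℝ)
    have d1 : HasDerivAt (fun x : ℝ => (1/2 + x/2) * Real.log (1/2 + x/2))
        ((Real.log (1/2 + x/2) + 1) * (1/2)) x :=
      by have := (Real.hasDerivAt_mul_log ha.ne').comp x inner1; exact this
    have d2 : HasDerivAt (fun x : ℝ => (1/2 - x/2) * Real.log (1/2 - x/2))
        ((Real.log (1/2 - x/2) + 1) * (-(1/2))) x :=
      by have := (Real.hasDerivAt_mul_log hb.ne').comp x inner2; exact this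
    have hd : HasDerivAt (fun x : ℝ => -((1/2 + x/2) * Real.log (1/2 + x/2))
        - (1/2 - x/2) * Real.log (1/2 - x/2))
        (-((Real.log (1/2 + x/2) + 1) * (1/2)) - (Real.log (1/2 - x/2) + 1) * (-(1/2))) x :=
      d1.neg.sub d2
    rw [hd.deriv]
    have hlog : Real.log (1/2 - x/2) < Real.log (1/2 + x/2) :=
      Real.log_lt_log hb (by cases hx; linarith)
    linarith

/-- For fixed `p ∈ (0,1)`, with `r(s) = √(1 − 4p(1−p)(1−s²))` and entanglement entropy
`S(s) = −(1/2 + r/2)ln(1/2 + r/2) − (1/2 − r/2)ln(1/2 − r/2)`, the map `s ↦ S(s)` is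
strictly decreasing on `[0,1]` and `S(1) = 0`. (In Lean, `Real.log 0 = 0`, which realizes
the convention `0 · ln 0 = 0`.) -/
theorem stmt2 (p : ℝ) (hp : p ∈ Set.Ioo (0 : ℝ) 1)
    (r S : ℝ → ℝ)
    (hr : ∀ s : ℝ, r s = Real.sqrt (1 - 4*p*(1-p)*(1 - s^2)))
    (hS : ∀ s : ℝ, S s = -((1/2 + r s / 2) * Real.log (1/2 + r s / 2))
        - (1/2 - r s / 2) * Real.log (1/2 - r s / 2)) :
    StrictAntiOn S (Set.Icc 0 1) ∧ S 1 = 0 := by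
  obtain ⟨hp0, hp1⟩ := hp
  have hr_mem : ∀ u ∈ Set.Icc (0:ℝ) 1, r u ∈ Set.Icc (0:ℝ) 1 := by
    intro u hu
    obtain ⟨hu0, hu1⟩ := hu
    rw [hr u]
    refine ⟨Real.sqrt_nonneg _, Real.sqrt_le_one.mpr ?_⟩
    have h1 : (0:ℝ) ≤ 1 - u^2 := by nlinarith
    nlinarith [mul_nonneg (mul_pos hp0 (sub_pos.mpr hp1)).le h1]
  constructor
  · intro s hs t ht hst
    have hlt : r s < r t := by
      rw [hr s, hr t]
      apply Real.sqrt_lt_sqrt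
      · have h1 : (0:ℝ) ≤ 1 - s^2 := by nlinarith [hs.1, hs.2]
        nlinarith [mul_nonneg (sq_nonneg (2*p - 1)) h1]
      · have hst2 : s^2 < t^2 := by nlinarith [hs.1, ht.1]
        nlinarith [mul_pos hp0 (sub_pos.mpr hp1)]
    have := F_strictAnti (hr_mem s hs) (hr_mem t ht) hlt
    rw [hS s, hS t]
    simpa using this
  · have hr1 : r 1 = 1 := by
      rw [hr 1]; norm_num
    rw [hS 1, hr1]
    norm_num
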